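/- arXiv:0810.0844 — 4 statements merged into one kernel-verified Lean document; each statement's English description precedes it below -/
import Mathlib

section
/- Let A be an associative ring in which the symmetric product x • y = xy + yx additionally satisfies the Leibniz rule with respect to the commutator bracket [x,y] = xy - yx, i.e. [x • y, z] = x • [y,z] + [x,z] • y, and is associative: x • (y • z) = (x • y) • z. If 2 is invertible in A (or A is torsion-free as an additive group), then the double commutator vanishes: [[x,y],z] = 0 for all x, y, z. -/
/-- In an associative ring whose symmetric product `x • y = xy + yx` satisfies the
Leibniz rule with respect to the commutator and is associative, and whose additive
group has no 2-torsion, the double commutator vanishes. -/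
theorem double_commutator_vanishes {A : Type*} [Ring A]
    (leibniz : ∀ x y z : A,
      (x*y + y*x)*z - z*(x*y + y*x)
        = (x*(y*z - z*y) + (y*z - z*y)*x) + ((x*z - z*x)*y + y*(x*z - z*x)))
    (assoc : ∀ x y z : A,
      x*(y*z + z*y) + (y*z + z*y)*x = (x*y + y*x)*z + z*(x*y + y*x))
    (no2torsion : ∀ a : A, a + a = 0 → a = 0)
    (x y z : A) :
    (x*y - y*x)*z - z*(x*y - y*x) = 0 := by
  have h := assoc x z y
  have e : (x*y - y*x)*z - z*(x*y - y*x)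
      = (x*(z*y + y*z) + (z*y + y*z)*x) - ((x*z + z*x)*y + y*(x*z + z*x)) := by
    noncomm_ring
  rw [e, h, sub_self]
end

section
/- With e(q) the deformed Eulerian idempotent in the Hecke algebra H₃(q) and ω = g₁g₂g₁ the maximal element, one has ω · e(q) = e(q). -/
open RatFunc

lemma hecke_aux {K A : Type*} [Field K] [Ring A] [Algebra K A] (g1 g2 : A) (s a b : K)
    (braid : g1 * g2 * g1 = g2 * g1 * g2)
    (h1 : g1 * g1 = 1 + s • g1) (h2 : g2 * g2 = 1 + s • g2)
    (hab : s * a = 2 * b) (h2K : (2 : K) ≠ 0) :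
    (g1 * g2 * g1) * (a • ((1 : A) - (2 : K)⁻¹ • (g1 * g2 + g1 + g2 + g2 * g1) + g1 * g2 * g1)
        + b • (g1 - g2 * g1 - g1 * g2 + g2))
      = a • ((1 : A) - (2 : K)⁻¹ • (g1 * g2 + g1 + g2 + g2 * g1) + g1 * g2 * g1)
        + b • (g1 - g2 * g1 - g1 * g2 + g2) := by
  have w1 : (g1 * g2 * g1) * g1 = g1 * g2 + s • (g1 * g2 * g1) := by
    rw [mul_assoc, h1, mul_add, mul_one, mul_smul_comm, mul_assoc]
  have w2 : (g1 * g2 * g1) * g2 = g2 * g1 + s • (g1 * g2 * g1) := by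
    rw [braid, mul_assoc, h2, mul_add, mul_one, mul_smul_comm, ← braid]
  have w12 : (g1 * g2 * g1) * (g1 * g2) =
      g1 + s • (g1 * g2) + s • (g2 * g1) + (s * s) • (g1 * g2 * g1) := by
    rw [← mul_assoc, w1, add_mul, smul_mul_assoc, w2, smul_add, smul_smul,
      mul_assoc g1 g2 g2, h2, mul_add, mul_one, mul_smul_comm]
    abel
  have w21 : (g1 * g2 * g1) * (g2 * g1) =
      g2 + s • (g1 * g2) + s • (g2 * g1) + (s * s) • (g1 * g2 * g1) := by
    rw [← mul_assoc, w2, add_mul, smul_mul_assoc, w1, smul_add, smul_smul,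
      mul_assoc g2 g1 g1, h1, mul_add, mul_one, mul_smul_comm]
    abel
  have ww : (g1 * g2 * g1) * (g1 * g2 * g1) =
      1 + s • g1 + s • g2 + (s * s) • (g1 * g2) + (s * s) • (g2 * g1)
        + (s + s * s * s) • (g1 * g2 * g1) := by
    rw [← mul_assoc, w12, add_mul, add_mul, add_mul, smul_mul_assoc, smul_mul_assoc,
      smul_mul_assoc, w1, h1, mul_assoc g2 g1 g1, h1]
    simp only [mul_add, mul_one, mul_smul_comm, smul_add, smul_smul]
    module
  simp only [mul_add, mul_sub, mul_one, mul_smul_comm, smul_add, smul_sub, smul_smul]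
  rw [w1, w2, w12, w21, ww]
  have hb : b = s * a / 2 := by rw [eq_div_iff h2K]; linear_combination -hab
  subst hb
  match_scalars <;> field_simp <;> ring

/-- In the Hecke algebra `H₃(q)`, the deformed Eulerian idempotent `e(q)` satisfies
`ω e(q) = e(q)` where `ω = g₁g₂g₁` is the maximal element. -/
theorem hecke_eulerian_omega_fixed
    {A : Type*} [Ring A] [Algebra (RatFunc ℂ) A]
    (g1 g2 : A)
    (braid : g1 * g2 * g1 = g2 * g1 * g2)
    (hecke1 : g1 * g1 = 1 + algebraMap (RatFunc ℂ) A (RatFunc.X - RatFunc.X⁻¹) * g1)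
    (hecke2 : g2 * g2 = 1 + algebraMap (RatFunc ℂ) A (RatFunc.X - RatFunc.X⁻¹) * g2) :
    let q : RatFunc ℂ := RatFunc.X
    let qn : RatFunc ℂ := q ^ 2 + 1 + q⁻¹ ^ 2
    let e : A :=
      qn⁻¹ • ((1 : A) - (2 : RatFunc ℂ)⁻¹ • (g1 * g2 + g1 + g2 + g2 * g1) + g1 * g2 * g1)
        + ((q - q⁻¹) / (2 * qn)) • (g1 - g2 * g1 - g1 * g2 + g2)
    (g1 * g2 * g1) * e = e := by
  intro q qn e
  set s : RatFunc ℂ := RatFunc.X - RatFunc.X⁻¹ with hs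
  have h1 : g1 * g1 = 1 + s • g1 := by rw [hecke1, Algebra.smul_def]
  have h2 : g2 * g2 = 1 + s • g2 := by rw [hecke2, Algebra.smul_def]
  have h2K : (2 : RatFunc ℂ) ≠ 0 := by
    have h : (2 : RatFunc ℂ) = algebraMap (Polynomial ℂ) (RatFunc ℂ) 2 := (map_ofNat _ 2).symm
    rw [h]
    exact RatFunc.algebraMap_ne_zero (by norm_num)
  have hqn : qn ≠ 0 := by
    have hx : (RatFunc.X : RatFunc ℂ) ≠ 0 := RatFunc.X_ne_zero
    intro h
    have hq2 : qn * RatFunc.X ^ 2 = RatFunc.X ^ 4 + RatFunc.X ^ 2 + 1 := by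
      show (RatFunc.X ^ 2 + 1 + RatFunc.X⁻¹ ^ 2) * RatFunc.X ^ 2 = _
      field_simp
    rw [h, zero_mul] at hq2
    have h3 : (RatFunc.X : RatFunc ℂ) ^ 4 + RatFunc.X ^ 2 + 1 =
        algebraMap (Polynomial ℂ) (RatFunc ℂ) (Polynomial.X ^ 4 + Polynomial.X ^ 2 + 1) := by
      simp [RatFunc.algebraMap_X]
    rw [h3] at hq2
    have h4 : (Polynomial.X ^ 4 + Polynomial.X ^ 2 + 1 : Polynomial ℂ) = 0 :=
      (map_eq_zero_iff _ (IsFractionRing.injective _ _)).mp hq2.symm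
    have := congrArg (fun p => Polynomial.coeff p 0) h4
    simp at this
  have hab : s * qn⁻¹ = 2 * ((q - q⁻¹) / (2 * qn)) := by
    show s * qn⁻¹ = 2 * ((RatFunc.X - RatFunc.X⁻¹) / (2 * qn))
    rw [hs]
    field_simp
  exact hecke_aux g1 g2 s qn⁻¹ ((q - q⁻¹) / (2 * qn)) braid h1 h2 hab h2K
end

section
/- For q ≠ ±1, the idempotent e(q) of the paper is the unique idempotent of H₃(q) of the form e(q) = (1/[3])(T_{123} - (1/2)(T_{231}+T_{213}+T_{132}+T_{312}) + T_{321}) + c(T_{213} - T_{312} - T_{231} + T_{132}) satisfying ω e = e; the equation ω e(q) = e(q) forces c = (q - q⁻¹)/(2[3]). -/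
open RatFunc

section aux
variable {K A : Type*} [Field K] [Ring A] [Algebra K A]

lemma hecke_prod_g1 (g1 g2 : A) (δ : K)
    (h1 : g1 * g1 = 1 + δ • g1) :
    g1 * g2 * g1 * g1 = g1 * g2 + δ • (g1 * g2 * g1) := by
  rw [mul_assoc (g1*g2) g1 g1, h1, mul_add, mul_one, mul_smul_comm]

lemma hecke_prod_g2 (g1 g2 : A) (δ : K)
    (braid : g1 * g2 * g1 = g2 * g1 * g2)
    (h2 : g2 * g2 = 1 + δ • g2) :
    g1 * g2 * g1 * g2 = g2 * g1 + δ • (g1 * g2 * g1) := by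
  rw [braid, mul_assoc (g2*g1) g2 g2, h2, mul_add, mul_one, mul_smul_comm]

lemma hecke_prod_g12 (g1 g2 : A) (δ : K)
    (braid : g1 * g2 * g1 = g2 * g1 * g2)
    (h1 : g1 * g1 = 1 + δ • g1)
    (h2 : g2 * g2 = 1 + δ • g2) :
    g1 * g2 * g1 * (g1 * g2)
      = g1 + δ • (g1 * g2) + δ • (g2 * g1) + (δ * δ) • (g1 * g2 * g1) := by
  rw [← mul_assoc, hecke_prod_g1 g1 g2 δ h1, add_mul, smul_mul_assoc,
    hecke_prod_g2 g1 g2 δ braid h2, mul_assoc, h2, mul_add, mul_one, mul_smul_comm,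
    smul_add, smul_smul]
  module

lemma hecke_prod_g21 (g1 g2 : A) (δ : K)
    (braid : g1 * g2 * g1 = g2 * g1 * g2)
    (h1 : g1 * g1 = 1 + δ • g1)
    (h2 : g2 * g2 = 1 + δ • g2) :
    g1 * g2 * g1 * (g2 * g1)
      = g2 + δ • (g1 * g2) + δ • (g2 * g1) + (δ * δ) • (g1 * g2 * g1) := by
  rw [← mul_assoc, hecke_prod_g2 g1 g2 δ braid h2, add_mul, smul_mul_assoc,
    hecke_prod_g1 g1 g2 δ h1, mul_assoc g2 g1 g1, h1, mul_add, mul_one, mul_smul_comm,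
    smul_add, smul_smul]
  module

lemma hecke_prod_w (g1 g2 : A) (δ : K)
    (braid : g1 * g2 * g1 = g2 * g1 * g2)
    (h1 : g1 * g1 = 1 + δ • g1)
    (h2 : g2 * g2 = 1 + δ • g2) :
    g1 * g2 * g1 * (g1 * g2 * g1)
      = 1 + δ • g1 + δ • g2 + (δ * δ) • (g1 * g2) + (δ * δ) • (g2 * g1)
        + (δ + δ * δ * δ) • (g1 * g2 * g1) := by
  rw [← mul_assoc, hecke_prod_g12 g1 g2 δ braid h1 h2, add_mul, add_mul, add_mul,
    smul_mul_assoc, smul_mul_assoc, smul_mul_assoc, h1,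
    hecke_prod_g1 g1 g2 δ h1, mul_assoc g2 g1 g1, h1, mul_add, mul_one, mul_smul_comm,
    smul_add, smul_add, smul_smul, smul_smul]
  module

lemma hecke_key (g1 g2 : A) (δ a c : K) (htwo : (2:K) ≠ 0)
    (braid : g1 * g2 * g1 = g2 * g1 * g2)
    (h1 : g1 * g1 = 1 + δ • g1)
    (h2 : g2 * g2 = 1 + δ • g2) :
    (g1 * g2 * g1) *
        (a • ((1 : A) - (2 : K)⁻¹ • (g1 * g2 + g1 + g2 + g2 * g1)
            + g1 * g2 * g1)
          + c • (g1 - g2 * g1 - g1 * g2 + g2))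
      - (a • ((1 : A) - (2 : K)⁻¹ • (g1 * g2 + g1 + g2 + g2 * g1)
            + g1 * g2 * g1)
          + c • (g1 - g2 * g1 - g1 * g2 + g2))
    = (a * δ - 2 * c) • g1 + (a * δ - 2 * c) • g2
      + ((a * δ - 2 * c) * (δ - 1)) • (g1 * g2)
      + ((a * δ - 2 * c) * (δ - 1)) • (g2 * g1)
      + ((a * δ - 2 * c) * (δ * δ - δ)) • (g1 * g2 * g1) := by
  simp only [mul_add, mul_sub, mul_smul_comm, mul_one,
    hecke_prod_g1 g1 g2 δ h1, hecke_prod_g2 g1 g2 δ braid h2,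
    hecke_prod_g12 g1 g2 δ braid h1 h2, hecke_prod_g21 g1 g2 δ braid h1 h2,
    hecke_prod_w g1 g2 δ braid h1 h2]
  match_scalars <;> field_simp <;> ring

end aux

instance : CharZero (RatFunc ℂ) :=
  charZero_of_injective_algebraMap (RatFunc.algebraMap_injective ℂ)

/-- Uniqueness of the deformed Eulerian idempotent: in the Hecke algebra `H₃(q)`
(with the six standard basis elements `T_w` linearly independent over `ℂ(q)`),
an element of the form
`e_c = (1/[3])(T₁₂₃ - ½(T₂₃₁+T₂₁₃+T₁₃₂+T₃₁₂) + T₃₂₁) + c (T₂₁₃ - T₃₁₂ - T₂₃₁ + T₁₃₂)`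
satisfies `ω e_c = e_c` if and only if `c = (q - q⁻¹)/(2[3])`. -/
theorem hecke_eulerian_idempotent_unique
    {A : Type*} [Ring A] [Algebra (RatFunc ℂ) A]
    (g1 g2 : A)
    (braid : g1 * g2 * g1 = g2 * g1 * g2)
    (hecke1 : g1 * g1 = 1 + algebraMap (RatFunc ℂ) A (RatFunc.X - RatFunc.X⁻¹) * g1)
    (hecke2 : g2 * g2 = 1 + algebraMap (RatFunc ℂ) A (RatFunc.X - RatFunc.X⁻¹) * g2)
    (basis : LinearIndependent (RatFunc ℂ)
      ![(1 : A), g1, g2, g1 * g2, g2 * g1, g1 * g2 * g1]) :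
    let q : RatFunc ℂ := RatFunc.X
    let qn : RatFunc ℂ := q ^ 2 + 1 + q⁻¹ ^ 2
    ∀ c : RatFunc ℂ,
      (g1 * g2 * g1) *
          (qn⁻¹ • ((1 : A) - (2 : RatFunc ℂ)⁻¹ • (g1 * g2 + g1 + g2 + g2 * g1)
              + g1 * g2 * g1)
            + c • (g1 - g2 * g1 - g1 * g2 + g2))
        = qn⁻¹ • ((1 : A) - (2 : RatFunc ℂ)⁻¹ • (g1 * g2 + g1 + g2 + g2 * g1)
              + g1 * g2 * g1)
            + c • (g1 - g2 * g1 - g1 * g2 + g2)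
      ↔ c = (q - q⁻¹) / (2 * qn) := by
  intro q qn c
  unfold q qn
  rw [← Algebra.smul_def] at hecke1 hecke2
  have htwo : (2 : RatFunc ℂ) ≠ 0 := by norm_num
  have key := hecke_key g1 g2 (RatFunc.X - RatFunc.X⁻¹)
    (RatFunc.X ^ 2 + 1 + RatFunc.X⁻¹ ^ 2)⁻¹ c htwo braid hecke1 hecke2
  set δ : RatFunc ℂ := RatFunc.X - RatFunc.X⁻¹ with hδ
  set a : RatFunc ℂ := (RatFunc.X ^ 2 + 1 + RatFunc.X⁻¹ ^ 2)⁻¹ with ha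
  constructor
  · intro h
    rw [h, sub_self] at key
    have hf : ∑ i : Fin 6,
        (![0, a * δ - 2 * c, a * δ - 2 * c, (a * δ - 2 * c) * (δ - 1),
          (a * δ - 2 * c) * (δ - 1), (a * δ - 2 * c) * (δ * δ - δ)] : Fin 6 → RatFunc ℂ) i
          • (![(1 : A), g1, g2, g1 * g2, g2 * g1, g1 * g2 * g1]) i = 0 := by
      rw [Fin.sum_univ_six]
      simp only [Matrix.cons_val_zero, Matrix.cons_val_one, Matrix.head_cons,
        Matrix.cons_val_two, Matrix.tail_cons, Matrix.cons_val_three,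
        Matrix.cons_val_four, Matrix.cons_val_succ]
      rw [zero_smul, zero_add]
      exact key.symm
    have hlin := Fintype.linearIndependent_iff.mp basis _ hf 1
    simp only [Matrix.cons_val_one, Matrix.head_cons, Matrix.cons_val_zero] at hlin
    rw [div_eq_mul_inv, mul_inv]
    linear_combination (-(2 : RatFunc ℂ)⁻¹) * hlin
  · intro hc
    have ht : a * δ - 2 * c = 0 := by
      rw [hc, div_eq_mul_inv, mul_inv]; ring
    rw [ht] at key
    simp only [zero_smul, zero_mul, add_zero, zero_add] at key
    exact sub_eq_zero.mp key
end

section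
/- In the Hecke algebra H₃(q), the elements Γ¹³₂ = 1 + q g₁ - (1 + q⁻¹)g₂ - (1+q)g₂g₁ + q⁻¹ g₁g₂ + g₂g₁g₂ and Γ¹²₃ = 1 + q g₂ - (1 + q⁻¹)g₁ - (1+q)g₁g₂ + q⁻¹ g₂g₁ + g₁g₂g₁ satisfy: Γ¹²₃ g₁ = -q⁻¹ Γ¹²₃ - Γ¹³₂, Γ¹³₂ g₁ = q Γ¹³₂, Γ¹²₃ g₂ = q Γ¹²₃, and Γ¹³₂ g₂ = -q⁻¹ Γ¹³₂ - Γ¹²₃. -/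
/-- Action of the Hecke generators on the spanning elements `Γ¹³₂`, `Γ¹²₃` of the
parastatistics Hecke ideal, in any `K`-algebra with invertible `q` where `g₁, g₂`
satisfy the braid and Hecke relations. -/
theorem hecke_gamma_action
    {K : Type*} [Field K] (q : K) (hq : q ≠ 0)
    {A : Type*} [Ring A] [Algebra K A]
    (g1 g2 : A)
    (braid : g1 * g2 * g1 = g2 * g1 * g2)
    (hecke1 : g1 * g1 = 1 + algebraMap K A (q - q⁻¹) * g1)
    (hecke2 : g2 * g2 = 1 + algebraMap K A (q - q⁻¹) * g2) :
    let Γ132 : A := 1 + q • g1 - (1 + q⁻¹) • g2 - (1 + q) • (g2 * g1)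
      + q⁻¹ • (g1 * g2) + g2 * g1 * g2
    let Γ123 : A := 1 + q • g2 - (1 + q⁻¹) • g1 - (1 + q) • (g1 * g2)
      + q⁻¹ • (g2 * g1) + g1 * g2 * g1
    Γ123 * g1 = -(q⁻¹ • Γ123) - Γ132 ∧
    Γ132 * g1 = q • Γ132 ∧
    Γ123 * g2 = q • Γ123 ∧
    Γ132 * g2 = -(q⁻¹ • Γ132) - Γ123 := by
  intro Γ132 Γ123
  have h1 : g1 * g1 = 1 + (q - q⁻¹) • g1 := by rw [hecke1, Algebra.smul_def]
  have h2 : g2 * g2 = 1 + (q - q⁻¹) • g2 := by rw [hecke2, Algebra.smul_def]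
  have hb : g2 * (g1 * g2) = g1 * (g2 * g1) := by
    rw [← mul_assoc, ← mul_assoc, braid]
  have hb2 : g2 * (g1 * (g2 * g1)) = g1 * g2 + (q - q⁻¹) • (g1 * (g2 * g1)) := by
    calc g2 * (g1 * (g2 * g1)) = g2 * g1 * g2 * g1 := by noncomm_ring
    _ = g1 * g2 * g1 * g1 := by rw [braid]
    _ = g1 * g2 * (g1 * g1) := by rw [mul_assoc]
    _ = _ := by rw [h1]; noncomm_ring
  have hb3 : g1 * (g1 * (g2 * g1)) = g2 * g1 + (q - q⁻¹) • (g1 * (g2 * g1)) := by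
    calc g1 * (g1 * (g2 * g1)) = g1 * g1 * (g2 * g1) := by rw [mul_assoc]
    _ = _ := by rw [h1]; noncomm_ring
  refine ⟨?_, ?_, ?_, ?_⟩ <;>
  · show _ = _
    simp only [Γ132, Γ123, mul_add, add_mul, sub_mul, mul_sub, smul_mul_assoc, mul_smul_comm,
      one_mul, mul_one, mul_assoc, h1, h2, hb, hb2, hb3, smul_add, smul_sub, smul_smul,
      neg_add, neg_sub]
    match_scalars <;> field_simp <;> ring
end
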